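/- Let X be an n×p real matrix with n ≥ 1, y ∈ ℝⁿ, β, γ ∈ ℝᵖ, and let η_X ≥ 0, η_ε ≥ 0. Then the supremum of ‖(X − Δ_X)β + Xγ + ε − y‖ over all pairs (Δ_X, ε), where Δ_X is an n×p real matrix with Frobenius norm ‖Δ_X‖_F ≤ η_X and ε ∈ ℝⁿ satisfies (1/n)‖ε‖ ≤ η_ε, equals ‖X(β + γ) − y‖ + η_X ‖β‖ + n·η_ε. -/

import Mathlib

open scoped BigOperators

noncomputable def RobustAux.N {n : ℕ} (x : Fin n → ℝ) : ℝ := Real.sqrt (∑ i, x i ^ 2)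

namespace RobustAux

lemma N_eq_norm {n : ℕ} (x : Fin n → ℝ) :
    N x = ‖(WithLp.equiv 2 (Fin n → ℝ)).symm x‖ := by
  rw [EuclideanSpace.norm_eq]
  simp [N, sq_abs]

lemma N_nonneg {n : ℕ} (x : Fin n → ℝ) : 0 ≤ N x := Real.sqrt_nonneg _

lemma N_add_le {n : ℕ} (x y : Fin n → ℝ) : N (x + y) ≤ N x + N y := by
  simp only [N_eq_norm]
  exact norm_add_le ((WithLp.equiv 2 (Fin n → ℝ)).symm x) ((WithLp.equiv 2 (Fin n → ℝ)).symm y)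

lemma N_smul {n : ℕ} (c : ℝ) (x : Fin n → ℝ) : N (c • x) = |c| * N x := by
  simp only [N_eq_norm]
  rw [show (WithLp.equiv 2 (Fin n → ℝ)).symm (c • x) =
    c • (WithLp.equiv 2 (Fin n → ℝ)).symm x from rfl]
  simp [norm_smul]

lemma N_eq_zero {n : ℕ} (x : Fin n → ℝ) : N x = 0 ↔ x = 0 := by
  simp only [N_eq_norm]
  rw [norm_eq_zero]
  constructor
  · intro h; exact congrArg (WithLp.equiv 2 (Fin n → ℝ)) h
  · intro h; rw [h]; rfl

lemma N_mulVec_le {n p : ℕ} (Δ : Matrix (Fin n) (Fin p) ℝ) (β : Fin p → ℝ) :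
    N (Δ.mulVec β) ≤ Real.sqrt (∑ i, ∑ j, Δ i j ^ 2) * N β := by
  rw [N, N, ← Real.sqrt_mul (by positivity)]
  apply Real.sqrt_le_sqrt
  rw [Finset.sum_mul]
  apply Finset.sum_le_sum
  intro i _
  simpa [Matrix.mulVec, dotProduct] using
    Finset.sum_mul_sq_le_sq_mul_sq Finset.univ (fun j => Δ i j) β

end RobustAux

open RobustAux

/-- For `n ≥ 1`, the supremum of `‖(X − Δ_X)β + Xγ + ε − y‖` over all
pairs `(Δ_X, ε)` with `‖Δ_X‖_F ≤ η_X` and `(1/n)‖ε‖ ≤ η_ε` equals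
`‖X(β + γ) − y‖ + η_X‖β‖ + n·η_ε`. -/
theorem robust_objective_supremum (n p : ℕ) (hn : 1 ≤ n)
    (X : Matrix (Fin n) (Fin p) ℝ) (y : Fin n → ℝ) (β γ : Fin p → ℝ)
    (ηX ηε : ℝ) (hηX : 0 ≤ ηX) (hηε : 0 ≤ ηε) :
    IsLUB {r : ℝ | ∃ (ΔX : Matrix (Fin n) (Fin p) ℝ) (ε : Fin n → ℝ),
        Real.sqrt (∑ i, ∑ j, ΔX i j ^ 2) ≤ ηX ∧
        (1 / (n : ℝ)) * Real.sqrt (∑ i, ε i ^ 2) ≤ ηε ∧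
        r = Real.sqrt (∑ i, ((X - ΔX).mulVec β i + X.mulVec γ i + ε i - y i) ^ 2)}
      (Real.sqrt (∑ i, (X.mulVec (β + γ) i - y i) ^ 2)
        + ηX * Real.sqrt (∑ j, β j ^ 2) + n * ηε) := by
  have hnpos : (0:ℝ) < n := by exact_mod_cast hn
  set v : Fin n → ℝ := fun i => X.mulVec (β + γ) i - y i with hvdef
  have hbβ0 : 0 ≤ N β := N_nonneg β
  constructor
  · -- upper bound
    rintro r ⟨ΔX, ε, hΔ, hε, rfl⟩
    have h1 : ∀ i, (X - ΔX).mulVec β i + X.mulVec γ i + ε i - y i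
        = (v + (-(ΔX.mulVec β)) + ε) i := by
      intro i
      simp only [Matrix.sub_mulVec, Matrix.mulVec_add, Pi.add_apply, Pi.neg_apply,
        Pi.sub_apply, hvdef]
      ring
    have h2 : Real.sqrt (∑ i, ((X - ΔX).mulVec β i + X.mulVec γ i + ε i - y i) ^ 2)
        = N (v + (-(ΔX.mulVec β)) + ε) := by
      unfold N
      congr 1
      exact Finset.sum_congr rfl fun i _ => by rw [h1]
    rw [h2]
    have hNneg : N (-(ΔX.mulVec β)) = N (ΔX.mulVec β) := by
      unfold N
      congr 1
      exact Finset.sum_congr rfl fun i _ => by simp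
    have hCS : N (ΔX.mulVec β) ≤ ηX * N β :=
      (N_mulVec_le ΔX β).trans (mul_le_mul_of_nonneg_right hΔ hbβ0)
    have hεle : N ε ≤ n * ηε := by
      have h3 : (n:ℝ) * ((1 / n) * N ε) ≤ n * ηε :=
        mul_le_mul_of_nonneg_left hε hnpos.le
      have h4 : (n:ℝ) * ((1 / n) * N ε) = N ε := by
        field_simp
      linarith
    have t1 := N_add_le (v + (-(ΔX.mulVec β))) ε
    have t2 := N_add_le v (-(ΔX.mulVec β))
    rw [hNneg] at t2
    show _ ≤ N v + ηX * N β + (n:ℝ) * ηε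
    linarith
  · -- least upper bound: the value is attained
    intro b hb
    have key : ∃ u : Fin n → ℝ, (∑ i, u i ^ 2) = 1 ∧
        ∀ c : ℝ, 0 ≤ c → N (v + c • u) = N v + c := by
      by_cases hv0 : v = 0
      · have hs : ∀ i : Fin n, ((if i = ⟨0, hn⟩ then (1:ℝ) else 0)) ^ 2
            = if i = ⟨0, hn⟩ then 1 else 0 := by
          intro i
          split <;> norm_num
        have hsum1 : ∑ i : Fin n, (if i = ⟨0, hn⟩ then (1:ℝ) else 0) ^ 2 = 1 := by
          rw [Finset.sum_congr rfl fun i _ => hs i, Finset.sum_ite_eq' Finset.univ]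
          simp
        refine ⟨fun i => if i = ⟨0, hn⟩ then (1:ℝ) else 0, hsum1, ?_⟩
        intro c hc
        have hN0 : N (0 : Fin n → ℝ) = 0 := by simp [N]
        rw [hv0, zero_add, N_smul, hN0, zero_add, abs_of_nonneg hc]
        have : N (fun i : Fin n => if i = ⟨0, hn⟩ then (1:ℝ) else 0) = 1 := by
          unfold N
          rw [hsum1, Real.sqrt_one]
        rw [this, mul_one]
      · have ha : 0 < N v := by
          rcases lt_or_eq_of_le (N_nonneg v) with h | h
          · exact h
          · exact absurd ((N_eq_zero v).mp h.symm) hv0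
        refine ⟨(N v)⁻¹ • v, ?_, ?_⟩
        · have h5 : N ((N v)⁻¹ • v) = 1 := by
            rw [N_smul, abs_of_nonneg (inv_nonneg.mpr ha.le), inv_mul_cancel₀ ha.ne']
          have h6 := h5
          unfold N at h6
          have := Real.sqrt_eq_one.mp h6
          simpa [N] using this
        · intro c hc
          have h7 : v + c • ((N v)⁻¹ • v) = (1 + c * (N v)⁻¹) • v := by
            funext i
            simp [Pi.smul_apply, smul_eq_mul]
            ring
          rw [h7, N_smul, abs_of_nonneg (by positivity)]
          field_simp
    obtain ⟨u, husq, hukey⟩ := key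
    set c : ℝ := ηX * N β + n * ηε with hcdef
    have hc0 : 0 ≤ c := add_nonneg (mul_nonneg hηX hbβ0) (mul_nonneg hnpos.le hηε)
    have hsqβ : ∑ j, β j ^ 2 = (N β) ^ 2 := (Real.sq_sqrt (by positivity)).symm
    set Δ0 : Matrix (Fin n) (Fin p) ℝ := fun i j => -(ηX * u i * β j / N β) with hΔ0
    apply hb
    refine ⟨Δ0, (↑n * ηε) • u, ?_, ?_, ?_⟩
    · -- Frobenius norm constraint
      by_cases hb0 : N β = 0
      · have hβ0 : ∀ j, β j = 0 := by
          have h8 : ∑ j, β j ^ 2 = 0 := by rw [hsqβ, hb0]; ring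
          intro j
          have := (Finset.sum_eq_zero_iff_of_nonneg
            (fun j _ => sq_nonneg (β j))).mp h8 j (Finset.mem_univ j)
          exact pow_eq_zero_iff (by norm_num) |>.mp this
        have : ∀ i : Fin n, ∑ j, Δ0 i j ^ 2 = 0 := by
          intro i
          apply Finset.sum_eq_zero
          intro j _
          rw [hΔ0]
          simp only
          rw [hβ0 j]
          ring
        rw [Finset.sum_congr rfl fun i _ => this i]
        simpa using hηX
      · have h9 : ∀ i : Fin n, ∑ j, Δ0 i j ^ 2
            = (ηX ^ 2 / (N β) ^ 2) * (u i ^ 2 * ∑ j, β j ^ 2) := by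
          intro i
          simp only [Finset.mul_sum]
          apply Finset.sum_congr rfl
          intro j _
          ring
        rw [Finset.sum_congr rfl fun i _ => h9 i]
        have h10 : ∑ i, (ηX ^ 2 / (N β) ^ 2) * (u i ^ 2 * ∑ j, β j ^ 2)
            = (ηX ^ 2 / (N β) ^ 2) * ((∑ i, u i ^ 2) * ∑ j, β j ^ 2) := by
          rw [← Finset.mul_sum]
          congr 1
          rw [Finset.sum_mul]
        rw [h10, husq, hsqβ]
        have : ηX ^ 2 / (N β) ^ 2 * (1 * (N β) ^ 2) = ηX ^ 2 := by
          field_simp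
        rw [this, Real.sqrt_sq hηX]
    · -- ε constraint
      have h11 : Real.sqrt (∑ i, (((↑n * ηε) • u) i) ^ 2) = ↑n * ηε := by
        have := N_smul ((n:ℝ) * ηε) u
        unfold N at this
        rw [this, abs_of_nonneg (mul_nonneg hnpos.le hηε)]
        rw [Real.sqrt_eq_one.mpr husq, mul_one]
      rw [h11]
      rw [one_div, inv_mul_eq_div, div_le_iff₀ hnpos]
      nlinarith
    · -- value equals the attained supremum
      have hmul : ∀ i, Matrix.mulVec Δ0 β i
          = -(ηX * N β * u i) := by
        intro i
        have h12 : Matrix.mulVec Δ0 β i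
            = -(ηX * u i / N β) * ∑ j, β j ^ 2 := by
          simp only [Matrix.mulVec, dotProduct, Finset.mul_sum]
          apply Finset.sum_congr rfl
          intro j _
          ring
        rw [h12, hsqβ]
        rcases eq_or_ne (N β) 0 with h | h
        · simp [h]
        · field_simp
      have hpt : ∀ i, (X - Δ0).mulVec β i
          + X.mulVec γ i + ((↑n * ηε) • u) i - y i = (v + c • u) i := by
        intro i
        rw [Matrix.sub_mulVec]
        simp only [Pi.sub_apply, Pi.add_apply, Pi.smul_apply, smul_eq_mul, hvdef]
        rw [hmul i]
        have : X.mulVec (β + γ) i = X.mulVec β i + X.mulVec γ i := by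
          rw [Matrix.mulVec_add]; rfl
        rw [this, hcdef]
        ring
      have h13 : Real.sqrt (∑ i, ((X - Δ0).mulVec β i
          + X.mulVec γ i + ((↑n * ηε) • u) i - y i) ^ 2) = N (v + c • u) := by
        unfold N
        congr 1
        exact Finset.sum_congr rfl fun i _ => by rw [hpt]
      rw [h13, hukey c hc0, hcdef]
      show N v + ηX * N β + ↑n * ηε = N v + (ηX * N β + ↑n * ηε)
      ring
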